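/- Let X ∈ ℝ^{n×k} satisfy XᵀAX = J and X⊥ ∈ ℝ^{n×(n−k)} be full-rank with XᵀX⊥ = 0. Then I_n = XJXᵀA + A⁻¹X⊥(X⊥ᵀA⁻¹X⊥)⁻¹X⊥ᵀ. -/

import Mathlib

open Matrix

/-- `I_n = X J Xᵀ A + A⁻¹ X⊥ (X⊥ᵀ A⁻¹ X⊥)⁻¹ X⊥ᵀ`. -/
theorem stmt_2 {n k : ℕ} (A : Matrix (Fin n) (Fin n) ℝ) (J : Matrix (Fin k) (Fin k) ℝ)
    (hA : Aᵀ = A) (hAinv : IsUnit A.det) (hJ : Jᵀ = J) (hJ2 : J * J = 1)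
    (X : Matrix (Fin n) (Fin k) ℝ) (hX : Xᵀ * A * X = J)
    (Xp : Matrix (Fin n) (Fin (n - k)) ℝ) (hXp : Xp.rank = n - k)
    (hperp : Xᵀ * Xp = 0) (hXpinv : IsUnit (Xpᵀ * A⁻¹ * Xp).det) :
    (1 : Matrix (Fin n) (Fin n) ℝ) =
      X * J * Xᵀ * A + A⁻¹ * Xp * (Xpᵀ * A⁻¹ * Xp)⁻¹ * Xpᵀ := by
  have hJu : IsUnit J := ⟨⟨J, J, hJ2, hJ2⟩, rfl⟩
  have hkn : k ≤ n := by
    have h1 : J.rank = k := by simpa using Matrix.rank_of_isUnit J hJu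
    calc k = J.rank := h1.symm
      _ = (Xᵀ * A * X).rank := by rw [hX]
      _ ≤ (Xᵀ * A).rank := Matrix.rank_mul_le_left _ _
      _ ≤ Xᵀ.rank := Matrix.rank_mul_le_left _ _
      _ ≤ n := Xᵀ.rank_le_card_width.trans (Fintype.card_fin n).le
  have e : Fin n ≃ Fin k ⊕ Fin (n - k) :=
    (finCongr (Nat.add_sub_cancel' hkn).symm).trans finSumFinEquiv.symm
  have hAA : A * A⁻¹ = 1 := Matrix.mul_nonsing_inv A hAinv
  have hMM : (Xpᵀ * A⁻¹ * Xp)⁻¹ * (Xpᵀ * A⁻¹ * Xp) = 1 :=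
    Matrix.nonsing_inv_mul _ hXpinv
  have hTS : fromRows (J * Xᵀ * A) ((Xpᵀ * A⁻¹ * Xp)⁻¹ * Xpᵀ) *
      fromCols X (A⁻¹ * Xp) = 1 := by
    rw [fromRows_mul_fromCols]
    have hX' : Xᵀ * (A * X) = J := by rw [← Matrix.mul_assoc]; exact hX
    have h11 : J * Xᵀ * A * X = 1 := by
      simp only [Matrix.mul_assoc]; rw [hX', hJ2]
    have h12 : J * Xᵀ * A * (A⁻¹ * Xp) = 0 := by
      simp only [Matrix.mul_assoc]
      rw [← Matrix.mul_assoc A A⁻¹ Xp, hAA, Matrix.one_mul, hperp, Matrix.mul_zero]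
    have h21 : (Xpᵀ * A⁻¹ * Xp)⁻¹ * Xpᵀ * X = 0 := by
      have hpx : Xpᵀ * X = 0 := by
        have := congrArg Matrix.transpose hperp
        simpa using this
      rw [Matrix.mul_assoc, hpx, Matrix.mul_zero]
    have h22 : (Xpᵀ * A⁻¹ * Xp)⁻¹ * Xpᵀ * (A⁻¹ * Xp) = 1 := by
      rw [Matrix.mul_assoc, ← Matrix.mul_assoc Xpᵀ A⁻¹ Xp, hMM]
    rw [h11, h12, h21, h22, fromBlocks_one]
  have hST : fromCols X (A⁻¹ * Xp) *
      fromRows (J * Xᵀ * A) ((Xpᵀ * A⁻¹ * Xp)⁻¹ * Xpᵀ) = 1 :=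
    (fromCols_mul_fromRows_eq_one_comm e _ _ _ _).mpr hTS
  rw [fromCols_mul_fromRows] at hST
  rw [← hST]
  simp only [Matrix.mul_assoc]
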